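/- Let Ω ⊆ ℝ^d be open and bounded, and define the bilinear form a(V, W) = ∫_Ω 2μ ε(V):ε(W) + λ tr(ε(V)) tr(ε(W)) + δ V·W dx on H^1(Ω)^d, where ε(V) = (DV + DVᵀ)/2. If μ > 0, dλ + 2μ > 0 and δ > 0, then a is symmetric, bounded, and coercive on H^1(Ω)^d: there exists c > 0 with a(V,V) ≥ c‖V‖²_{H^1(Ω)^d}. -/

import Mathlib

open MeasureTheory

noncomputable section

/-- The Jacobian matrix `(DV)_{ij} = ∂_j V_i` of a vector field. -/
def Dmat {d : ℕ} (V : EuclideanSpace ℝ (Fin d) → EuclideanSpace ℝ (Fin d))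
    (x : EuclideanSpace ℝ (Fin d)) : Matrix (Fin d) (Fin d) ℝ :=
  fun i j => fderiv ℝ V x (EuclideanSpace.single j 1) i

/-- The linearized strain tensor `ε(V) = (DV + DVᵀ)/2`. -/
def strain {d : ℕ} (V : EuclideanSpace ℝ (Fin d) → EuclideanSpace ℝ (Fin d))
    (x : EuclideanSpace ℝ (Fin d)) : Matrix (Fin d) (Fin d) ℝ :=
  fun i j => (Dmat V x i j + Dmat V x j i) / 2

/-- Squared Frobenius norm of a matrix. -/
def frobSq {d : ℕ} (A : Matrix (Fin d) (Fin d) ℝ) : ℝ := ∑ i, ∑ j, (A i j) ^ 2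

/-- Frobenius inner product `A : B` of matrices. -/
def frobIp {d : ℕ} (A B : Matrix (Fin d) (Fin d) ℝ) : ℝ := ∑ i, ∑ j, A i j * B i j

/-- The squared `H^1(Ω)^d` norm of a vector field. -/
def h1Sq {d : ℕ} (Ω : Set (EuclideanSpace ℝ (Fin d)))
    (V : EuclideanSpace ℝ (Fin d) → EuclideanSpace ℝ (Fin d)) : ℝ :=
  ∫ x in Ω, (‖V x‖ ^ 2 + frobSq (Dmat V x))

/-- Admissible vector fields: differentiable with `H^1(Ω)`-integrability. -/
def Adm {d : ℕ} (Ω : Set (EuclideanSpace ℝ (Fin d)))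
    (V : EuclideanSpace ℝ (Fin d) → EuclideanSpace ℝ (Fin d)) : Prop :=
  Differentiable ℝ V ∧
    Integrable (fun x => ‖V x‖ ^ 2 + frobSq (Dmat V x)) (volume.restrict Ω)

/-- The linear elasticity bilinear form
`a(V,W) = ∫_Ω 2μ ε(V):ε(W) + λ tr(ε(V)) tr(ε(W)) + δ V·W dx`. -/
def elasticityForm {d : ℕ} (Ω : Set (EuclideanSpace ℝ (Fin d)))
    (mu lam del : ℝ)
    (V W : EuclideanSpace ℝ (Fin d) → EuclideanSpace ℝ (Fin d)) : ℝ :=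
  ∫ x in Ω,
    (2 * mu * frobIp (strain V x) (strain W x)
      + lam * (∑ i, strain V x i i) * (∑ i, strain W x i i)
      + del * (inner ℝ (V x) (W x) : ℝ))

lemma frobSq_nonneg {d : ℕ} (A : Matrix (Fin d) (Fin d) ℝ) : 0 ≤ frobSq A :=
  Finset.sum_nonneg fun _ _ => Finset.sum_nonneg fun _ _ => sq_nonneg _

lemma frobIp_self {d : ℕ} (A : Matrix (Fin d) (Fin d) ℝ) : frobIp A A = frobSq A := by
  rw [frobIp, frobSq]
  exact Finset.sum_congr rfl fun i _ => Finset.sum_congr rfl fun j _ => (sq (A i j)).symm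

lemma frobIp_sq_le {d : ℕ} (A B : Matrix (Fin d) (Fin d) ℝ) :
    (frobIp A B) ^ 2 ≤ frobSq A * frobSq B := by
  have h1 : frobIp A B = ∑ p : Fin d × Fin d, A p.1 p.2 * B p.1 p.2 := by
    rw [frobIp, ← Finset.sum_product', Finset.univ_product_univ]
  have h2 : frobSq A = ∑ p : Fin d × Fin d, (A p.1 p.2) ^ 2 := by
    rw [frobSq, ← Finset.sum_product', Finset.univ_product_univ]
  have h3 : frobSq B = ∑ p : Fin d × Fin d, (B p.1 p.2) ^ 2 := by
    rw [frobSq, ← Finset.sum_product', Finset.univ_product_univ]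
  rw [h1, h2, h3]
  exact Finset.sum_mul_sq_le_sq_mul_sq _ _ _

lemma abs_frobIp_le {d : ℕ} (A B : Matrix (Fin d) (Fin d) ℝ) :
    |frobIp A B| ≤ Real.sqrt (frobSq A) * Real.sqrt (frobSq B) := by
  have := Real.sqrt_le_sqrt (frobIp_sq_le A B)
  rwa [Real.sqrt_sq_eq_abs, Real.sqrt_mul (frobSq_nonneg A)] at this

lemma trace_sq_le {d : ℕ} (A : Matrix (Fin d) (Fin d) ℝ) :
    (∑ i, A i i) ^ 2 ≤ (d : ℝ) * frobSq A := by
  calc (∑ i, A i i) ^ 2 ≤ (Finset.univ.card (α := Fin d)) * ∑ i, (A i i) ^ 2 :=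
        sq_sum_le_card_mul_sum_sq
    _ ≤ (d : ℝ) * frobSq A := by
        rw [Finset.card_univ, Fintype.card_fin]
        refine mul_le_mul_of_nonneg_left ?_ (by positivity)
        refine Finset.sum_le_sum fun i _ => ?_
        exact Finset.single_le_sum (f := fun j => (A i j) ^ 2)
          (fun j _ => sq_nonneg _) (Finset.mem_univ i)

lemma abs_trace_le {d : ℕ} (A : Matrix (Fin d) (Fin d) ℝ) :
    |∑ i, A i i| ≤ Real.sqrt d * Real.sqrt (frobSq A) := by
  have := Real.sqrt_le_sqrt (trace_sq_le A)
  rwa [Real.sqrt_sq_eq_abs, Real.sqrt_mul (by positivity)] at this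

lemma frobSq_strain_le {d : ℕ} (V : EuclideanSpace ℝ (Fin d) → EuclideanSpace ℝ (Fin d))
    (x : EuclideanSpace ℝ (Fin d)) : frobSq (strain V x) ≤ frobSq (Dmat V x) := by
  set A := Dmat V x with hA
  calc frobSq (strain V x) ≤ ∑ i, ∑ j, ((A i j) ^ 2 + (A j i) ^ 2) / 2 := by
        refine Finset.sum_le_sum fun i _ => Finset.sum_le_sum fun j _ => ?_
        show ((A i j + A j i) / 2) ^ 2 ≤ _
        nlinarith [sq_nonneg (A i j - A j i)]
    _ = frobSq A := by
        simp only [add_div, Finset.sum_add_distrib]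
        rw [Finset.sum_comm (f := fun i j => (A j i) ^ 2 / 2)]
        rw [frobSq, ← Finset.sum_add_distrib]
        congr 1; funext i
        rw [← Finset.sum_add_distrib]
        refine Finset.sum_congr rfl fun j _ => by ring

lemma measurable_Dmat_entry {d : ℕ} (V : EuclideanSpace ℝ (Fin d) → EuclideanSpace ℝ (Fin d))
    (i j : Fin d) : Measurable fun x => Dmat V x i j := by
  have h := measurable_fderiv_apply_const ℝ V (EuclideanSpace.single j 1)
  exact (measurable_pi_apply i).comp ((WithLp.measurable_ofLp 2 _).comp h)

lemma measurable_strain_entry {d : ℕ} (V : EuclideanSpace ℝ (Fin d) → EuclideanSpace ℝ (Fin d))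
    (i j : Fin d) : Measurable fun x => strain V x i j :=
  ((measurable_Dmat_entry V i j).add (measurable_Dmat_entry V j i)).div_const 2

lemma measurable_frobSq_strain {d : ℕ} (V : EuclideanSpace ℝ (Fin d) → EuclideanSpace ℝ (Fin d)) :
    Measurable fun x => frobSq (strain V x) :=
  Finset.measurable_sum _ fun i _ =>
    Finset.measurable_sum _ fun j _ => (measurable_strain_entry V i j).pow_const 2

lemma measurable_frobSq_Dmat {d : ℕ} (V : EuclideanSpace ℝ (Fin d) → EuclideanSpace ℝ (Fin d)) :
    Measurable fun x => frobSq (Dmat V x) :=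
  Finset.measurable_sum _ fun i _ =>
    Finset.measurable_sum _ fun j _ => (measurable_Dmat_entry V i j).pow_const 2

lemma measurable_frobIp_strain {d : ℕ}
    (V W : EuclideanSpace ℝ (Fin d) → EuclideanSpace ℝ (Fin d)) :
    Measurable fun x => frobIp (strain V x) (strain W x) :=
  Finset.measurable_sum _ fun i _ =>
    Finset.measurable_sum _ fun j _ =>
      (measurable_strain_entry V i j).mul (measurable_strain_entry W i j)

lemma measurable_trace_strain {d : ℕ}
    (V : EuclideanSpace ℝ (Fin d) → EuclideanSpace ℝ (Fin d)) :
    Measurable fun x => ∑ i, strain V x i i :=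
  Finset.measurable_sum _ fun i _ => measurable_strain_entry V i i

lemma integral_cauchy {α : Type*} [MeasurableSpace α] (μ : Measure α) {f g : α → ℝ}
    (hfm : AEStronglyMeasurable f μ) (hgm : AEStronglyMeasurable g μ)
    (hf0 : ∀ x, 0 ≤ f x) (hg0 : ∀ x, 0 ≤ g x)
    (hf2 : Integrable (fun x => f x ^ 2) μ) (hg2 : Integrable (fun x => g x ^ 2) μ) :
    ∫ x, f x * g x ∂μ ≤ Real.sqrt (∫ x, f x ^ 2 ∂μ) * Real.sqrt (∫ x, g x ^ 2 ∂μ) := by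
  have hpq : Real.HolderConjugate 2 2 := Real.holderConjugate_iff.mpr ⟨one_lt_two, by norm_num⟩
  have h2 : ENNReal.ofReal (2 : ℝ) = 2 := by norm_num
  have hf : MemLp f (ENNReal.ofReal (2:ℝ)) μ := by
    rw [h2]; exact (memLp_two_iff_integrable_sq hfm).2 hf2
  have hg : MemLp g (ENNReal.ofReal (2:ℝ)) μ := by
    rw [h2]; exact (memLp_two_iff_integrable_sq hgm).2 hg2
  have key := integral_mul_le_Lp_mul_Lq_of_nonneg hpq (Filter.Eventually.of_forall hf0)
    (Filter.Eventually.of_forall hg0) hf hg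
  have e1 : ∀ (h : α → ℝ), (∫ x, h x ^ (2:ℝ) ∂μ) = ∫ x, h x ^ 2 ∂μ := by
    intro h; refine integral_congr_ae (Filter.Eventually.of_forall fun x => ?_)
    show h x ^ (2:ℝ) = h x ^ (2:ℕ)
    rw [show (2:ℝ) = ((2:ℕ):ℝ) by norm_num, Real.rpow_natCast]
  rw [e1 f, e1 g] at key
  calc ∫ x, f x * g x ∂μ ≤ (∫ x, f x ^ 2 ∂μ) ^ (1/2:ℝ) * (∫ x, g x ^ 2 ∂μ) ^ (1/2:ℝ) := key
    _ = _ := by rw [← Real.sqrt_eq_rpow, ← Real.sqrt_eq_rpow]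

/-- Let `Ω ⊆ ℝ^d` be open and bounded (with Lipschitz
boundary, so that Korn's second inequality `hKorn` holds). If `μ > 0`,
`dλ + 2μ > 0` and `δ > 0`, then the elasticity form `a` is symmetric, bounded
and coercive on `H^1(Ω)^d`: there is `c > 0` with `a(V,V) ≥ c ‖V‖²_{H¹}`. -/
theorem elasticity_form_symmetric_bounded_coercive {d : ℕ} (hd : 0 < d)
    (Ω : Set (EuclideanSpace ℝ (Fin d))) (hΩ : IsOpen Ω)
    (hΩb : Bornology.IsBounded Ω)
    (mu lam del : ℝ) (hmu : 0 < mu) (hlam : 0 < (d : ℝ) * lam + 2 * mu)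
    (hdel : 0 < del)
    (hKorn : ∃ C : ℝ, 0 < C ∧ ∀ V, Adm Ω V →
      h1Sq Ω V ≤ C * ((∫ x in Ω, frobSq (strain V x)) + ∫ x in Ω, ‖V x‖ ^ 2)) :
    (∀ V W, elasticityForm Ω mu lam del V W = elasticityForm Ω mu lam del W V) ∧
    (∃ M : ℝ, ∀ V W, Adm Ω V → Adm Ω W →
      |elasticityForm Ω mu lam del V W| ≤
        M * Real.sqrt (h1Sq Ω V) * Real.sqrt (h1Sq Ω W)) ∧
    (∃ c : ℝ, 0 < c ∧ ∀ V, Adm Ω V →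
      c * h1Sq Ω V ≤ elasticityForm Ω mu lam del V V) := by
  obtain ⟨C, hC, hK⟩ := hKorn
  -- notation
  set μm : Measure (EuclideanSpace ℝ (Fin d)) := volume.restrict Ω with hμm
  have hMc : (0:ℝ) ≤ 2 * mu + |lam| * d + del := by positivity
  -- common facts for admissible fields
  have keyP : ∀ V : EuclideanSpace ℝ (Fin d) → EuclideanSpace ℝ (Fin d), Adm Ω V →
      Measurable (fun x => ‖V x‖ ^ 2 + frobSq (Dmat V x)) := by
    intro V hV
    exact ((hV.1.continuous.norm.measurable).pow_const 2).add (measurable_frobSq_Dmat V)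
  refine ⟨?_, ?_, ?_⟩
  · -- symmetry
    intro V W
    rw [elasticityForm, elasticityForm]
    refine integral_congr_ae (Filter.Eventually.of_forall fun x => ?_)
    have h1 : frobIp (strain V x) (strain W x) = frobIp (strain W x) (strain V x) := by
      rw [frobIp, frobIp]
      exact Finset.sum_congr rfl fun i _ => Finset.sum_congr rfl fun j _ => mul_comm _ _
    have h2 : (inner ℝ (V x) (W x) : ℝ) = (inner ℝ (W x) (V x) : ℝ) := real_inner_comm _ _
    simp only [h1, h2]; ring
  · -- boundedness
    refine ⟨2 * mu + |lam| * d + del, ?_⟩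
    intro V W hV hW
    set f : EuclideanSpace ℝ (Fin d) → ℝ :=
      fun x => Real.sqrt (‖V x‖ ^ 2 + frobSq (Dmat V x)) with hfdef
    set g : EuclideanSpace ℝ (Fin d) → ℝ :=
      fun x => Real.sqrt (‖W x‖ ^ 2 + frobSq (Dmat W x)) with hgdef
    have hPV0 : ∀ x, (0:ℝ) ≤ ‖V x‖ ^ 2 + frobSq (Dmat V x) :=
      fun x => add_nonneg (sq_nonneg _) (frobSq_nonneg _)
    have hPW0 : ∀ x, (0:ℝ) ≤ ‖W x‖ ^ 2 + frobSq (Dmat W x) :=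
      fun x => add_nonneg (sq_nonneg _) (frobSq_nonneg _)
    have hf2 : (fun x => f x ^ 2) = fun x => ‖V x‖ ^ 2 + frobSq (Dmat V x) :=
      funext fun x => Real.sq_sqrt (hPV0 x)
    have hg2 : (fun x => g x ^ 2) = fun x => ‖W x‖ ^ 2 + frobSq (Dmat W x) :=
      funext fun x => Real.sq_sqrt (hPW0 x)
    have hsV : ∀ x, Real.sqrt (frobSq (strain V x)) ≤ f x := fun x =>
      Real.sqrt_le_sqrt ((frobSq_strain_le V x).trans (le_add_of_nonneg_left (sq_nonneg _)))
    have hsW : ∀ x, Real.sqrt (frobSq (strain W x)) ≤ g x := fun x =>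
      Real.sqrt_le_sqrt ((frobSq_strain_le W x).trans (le_add_of_nonneg_left (sq_nonneg _)))
    have hnV : ∀ x, ‖V x‖ ≤ f x := by
      intro x
      rw [hfdef, ← Real.sqrt_sq (norm_nonneg (V x))]
      exact Real.sqrt_le_sqrt (le_add_of_nonneg_right (frobSq_nonneg _))
    have hnW : ∀ x, ‖W x‖ ≤ g x := by
      intro x
      rw [hgdef, ← Real.sqrt_sq (norm_nonneg (W x))]
      exact Real.sqrt_le_sqrt (le_add_of_nonneg_right (frobSq_nonneg _))
    have hf0 : ∀ x, 0 ≤ f x := fun x => Real.sqrt_nonneg _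
    have hg0 : ∀ x, 0 ≤ g x := fun x => Real.sqrt_nonneg _
    -- pointwise bound on the integrand
    have hpt : ∀ x, |2 * mu * frobIp (strain V x) (strain W x)
        + lam * (∑ i, strain V x i i) * (∑ i, strain W x i i)
        + del * (inner ℝ (V x) (W x) : ℝ)|
        ≤ (2 * mu + |lam| * d + del) * (f x * g x) := by
      intro x
      have e1 : |frobIp (strain V x) (strain W x)| ≤ f x * g x :=
        (abs_frobIp_le _ _).trans
          (mul_le_mul (hsV x) (hsW x) (Real.sqrt_nonneg _) (hf0 x))
      have e2 : |(∑ i, strain V x i i) * (∑ i, strain W x i i)| ≤ (d:ℝ) * (f x * g x) := by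
        rw [abs_mul]
        calc |∑ i, strain V x i i| * |∑ i, strain W x i i|
            ≤ (Real.sqrt d * f x) * (Real.sqrt d * g x) := by
              refine mul_le_mul ?_ ?_ (abs_nonneg _) (by positivity)
              · exact (abs_trace_le _).trans
                  (mul_le_mul_of_nonneg_left (hsV x) (Real.sqrt_nonneg _))
              · exact (abs_trace_le _).trans
                  (mul_le_mul_of_nonneg_left (hsW x) (Real.sqrt_nonneg _))
          _ = (Real.sqrt d * Real.sqrt d) * (f x * g x) := by ring
          _ = (d:ℝ) * (f x * g x) := by
              rw [Real.mul_self_sqrt (by positivity)]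
      have e3 : |(inner ℝ (V x) (W x) : ℝ)| ≤ f x * g x :=
        (abs_real_inner_le_norm _ _).trans
          (mul_le_mul (hnV x) (hnW x) (norm_nonneg _) (hf0 x))
      calc |2 * mu * frobIp (strain V x) (strain W x)
            + lam * (∑ i, strain V x i i) * (∑ i, strain W x i i)
            + del * (inner ℝ (V x) (W x) : ℝ)|
          ≤ |2 * mu * frobIp (strain V x) (strain W x)|
            + |lam * (∑ i, strain V x i i) * (∑ i, strain W x i i)|
            + |del * (inner ℝ (V x) (W x) : ℝ)| := abs_add_three _ _ _
        _ ≤ 2 * mu * (f x * g x) + |lam| * ((d:ℝ) * (f x * g x)) + del * (f x * g x) := by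
            refine add_le_add (add_le_add ?_ ?_) ?_
            · rw [abs_mul, abs_of_nonneg (by positivity : (0:ℝ) ≤ 2 * mu)]
              exact mul_le_mul_of_nonneg_left e1 (by positivity)
            · rw [mul_assoc, abs_mul]
              exact mul_le_mul_of_nonneg_left e2 (abs_nonneg _)
            · rw [abs_mul, abs_of_nonneg hdel.le]
              exact mul_le_mul_of_nonneg_left e3 hdel.le
        _ = (2 * mu + |lam| * d + del) * (f x * g x) := by ring
    -- measurability
    have hfm : Measurable f := (keyP V hV).sqrt
    have hgm : Measurable g := (keyP W hW).sqrt
    have hqm : Measurable (fun x => 2 * mu * frobIp (strain V x) (strain W x)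
        + lam * (∑ i, strain V x i i) * (∑ i, strain W x i i)
        + del * (inner ℝ (V x) (W x) : ℝ)) := by
      refine (((measurable_frobIp_strain V W).const_mul _).add ?_).add ?_
      · exact (((measurable_trace_strain V).const_mul lam).mul (measurable_trace_strain W))
      · exact ((hV.1.continuous.inner hW.1.continuous).measurable).const_mul del
    -- integrability of f * g
    have hfg_int : Integrable (fun x => f x * g x) μm := by
      refine Integrable.mono ((hV.2.add hW.2).div_const 2)
        (hfm.mul hgm).aestronglyMeasurable
        (Filter.Eventually.of_forall fun x => ?_)
      have h1 : f x * g x ≤ (f x ^ 2 + g x ^ 2) / 2 := by nlinarith [sq_nonneg (f x - g x)]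
      have h2 : f x ^ 2 = ‖V x‖ ^ 2 + frobSq (Dmat V x) := congrFun hf2 x
      have h3 : g x ^ 2 = ‖W x‖ ^ 2 + frobSq (Dmat W x) := congrFun hg2 x
      simp only [Pi.add_apply, Real.norm_eq_abs]
      rw [abs_of_nonneg (mul_nonneg (hf0 x) (hg0 x)),
        abs_of_nonneg (div_nonneg (add_nonneg (hPV0 x) (hPW0 x)) (by norm_num : (0:ℝ) ≤ 2))]
      calc f x * g x ≤ (f x ^ 2 + g x ^ 2) / 2 := h1
        _ = _ := by rw [h2, h3]
    -- chain of inequalities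
    have step1 : |elasticityForm Ω mu lam del V W| ≤
        ∫ x, |2 * mu * frobIp (strain V x) (strain W x)
          + lam * (∑ i, strain V x i i) * (∑ i, strain W x i i)
          + del * (inner ℝ (V x) (W x) : ℝ)| ∂μm := by
      rw [elasticityForm]
      simpa [Real.norm_eq_abs] using norm_integral_le_integral_norm (μ := μm)
        (f := fun x => 2 * mu * frobIp (strain V x) (strain W x)
          + lam * (∑ i, strain V x i i) * (∑ i, strain W x i i)
          + del * (inner ℝ (V x) (W x) : ℝ))
    have step2 : ∫ x, |2 * mu * frobIp (strain V x) (strain W x)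
          + lam * (∑ i, strain V x i i) * (∑ i, strain W x i i)
          + del * (inner ℝ (V x) (W x) : ℝ)| ∂μm ≤
        ∫ x, (2 * mu + |lam| * d + del) * (f x * g x) ∂μm := by
      refine integral_mono_of_nonneg (Filter.Eventually.of_forall fun x => abs_nonneg _)
        (hfg_int.const_mul _) (Filter.Eventually.of_forall fun x => hpt x)
    have step3 : ∫ x, (2 * mu + |lam| * d + del) * (f x * g x) ∂μm =
        (2 * mu + |lam| * d + del) * ∫ x, f x * g x ∂μm := integral_const_mul _ _
    have step4 : ∫ x, f x * g x ∂μm ≤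
        Real.sqrt (∫ x, f x ^ 2 ∂μm) * Real.sqrt (∫ x, g x ^ 2 ∂μm) := by
      refine integral_cauchy μm hfm.aestronglyMeasurable hgm.aestronglyMeasurable hf0 hg0 ?_ ?_
      · rw [hf2]; exact hV.2
      · rw [hg2]; exact hW.2
    have e4 : (∫ x, f x ^ 2 ∂μm) = h1Sq Ω V := by rw [hf2]; rfl
    have e5 : (∫ x, g x ^ 2 ∂μm) = h1Sq Ω W := by rw [hg2]; rfl
    rw [e4, e5] at step4
    calc |elasticityForm Ω mu lam del V W|
        ≤ (2 * mu + |lam| * d + del) * ∫ x, f x * g x ∂μm := by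
          rw [← step3]; exact step1.trans step2
      _ ≤ (2 * mu + |lam| * d + del) * (Real.sqrt (h1Sq Ω V) * Real.sqrt (h1Sq Ω W)) :=
          mul_le_mul_of_nonneg_left step4 hMc
      _ = (2 * mu + |lam| * d + del) * Real.sqrt (h1Sq Ω V) * Real.sqrt (h1Sq Ω W) := by ring
  · -- coercivity
    have hm : (0:ℝ) < min (2 * mu) (2 * mu + d * lam) := by
      refine lt_min (by linarith) (by linarith)
    have hc' : (0:ℝ) < min (min (2 * mu) (2 * mu + d * lam)) del := lt_min hm hdel
    set c' : ℝ := min (min (2 * mu) (2 * mu + d * lam)) del with hc'def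
    refine ⟨c' / C, div_pos hc' hC, ?_⟩
    intro V hV
    have hS0 : ∀ x, (0:ℝ) ≤ frobSq (strain V x) := fun x => frobSq_nonneg _
    have hN0 : ∀ x, (0:ℝ) ≤ ‖V x‖ ^ 2 := fun x => sq_nonneg _
    have hPV0 : ∀ x, (0:ℝ) ≤ ‖V x‖ ^ 2 + frobSq (Dmat V x) :=
      fun x => add_nonneg (sq_nonneg _) (frobSq_nonneg _)
    have hSP : ∀ x, frobSq (strain V x) ≤ ‖V x‖ ^ 2 + frobSq (Dmat V x) :=
      fun x => (frobSq_strain_le V x).trans (le_add_of_nonneg_left (sq_nonneg _))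
    have hNP : ∀ x, ‖V x‖ ^ 2 ≤ ‖V x‖ ^ 2 + frobSq (Dmat V x) :=
      fun x => le_add_of_nonneg_right (frobSq_nonneg _)
    have hSint : Integrable (fun x => frobSq (strain V x)) μm := by
      refine Integrable.mono hV.2 (measurable_frobSq_strain V).aestronglyMeasurable
        (Filter.Eventually.of_forall fun x => ?_)
      rw [Real.norm_eq_abs, Real.norm_eq_abs, abs_of_nonneg (hS0 x), abs_of_nonneg (hPV0 x)]
      exact hSP x
    have hNint : Integrable (fun x => ‖V x‖ ^ 2) μm := by
      refine Integrable.mono hV.2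
        ((hV.1.continuous.norm.measurable).pow_const 2).aestronglyMeasurable
        (Filter.Eventually.of_forall fun x => ?_)
      rw [Real.norm_eq_abs, Real.norm_eq_abs, abs_of_nonneg (hN0 x), abs_of_nonneg (hPV0 x)]
      exact hNP x
    -- pointwise coercivity
    have hpt : ∀ x, c' * (frobSq (strain V x) + ‖V x‖ ^ 2) ≤
        2 * mu * frobIp (strain V x) (strain V x)
          + lam * (∑ i, strain V x i i) * (∑ i, strain V x i i)
          + del * (inner ℝ (V x) (V x) : ℝ) := by
      intro x
      rw [frobIp_self, real_inner_self_eq_norm_sq]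
      have htr : (∑ i, strain V x i i) ^ 2 ≤ (d:ℝ) * frobSq (strain V x) := trace_sq_le _
      have h1 : min (2 * mu) (2 * mu + d * lam) * frobSq (strain V x) ≤
          2 * mu * frobSq (strain V x)
            + lam * (∑ i, strain V x i i) * (∑ i, strain V x i i) := by
        rcases le_or_gt 0 lam with hl | hl
        · have : min (2 * mu) (2 * mu + d * lam) ≤ 2 * mu := min_le_left _ _
          nlinarith [sq_nonneg (∑ i, strain V x i i), hS0 x]
        · have h2 : min (2 * mu) (2 * mu + d * lam) ≤ 2 * mu + d * lam := min_le_right _ _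
          have h3 : lam * ((d:ℝ) * frobSq (strain V x)) ≤ lam * (∑ i, strain V x i i) ^ 2 :=
            mul_le_mul_of_nonpos_left htr hl.le
          nlinarith [hS0 x]
      have h4 : c' ≤ min (2 * mu) (2 * mu + d * lam) := min_le_left _ _
      have h5 : c' ≤ del := min_le_right _ _
      nlinarith [mul_le_mul_of_nonneg_right h4 (hS0 x),
        mul_le_mul_of_nonneg_right h5 (hN0 x), hS0 x, hN0 x, h1]
    -- integrability of the quadratic form integrand
    have hqm : Measurable (fun x => 2 * mu * frobIp (strain V x) (strain V x)
        + lam * (∑ i, strain V x i i) * (∑ i, strain V x i i)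
        + del * (inner ℝ (V x) (V x) : ℝ)) := by
      refine (((measurable_frobIp_strain V V).const_mul _).add ?_).add ?_
      · exact (((measurable_trace_strain V).const_mul lam).mul (measurable_trace_strain V))
      · exact ((hV.1.continuous.inner hV.1.continuous).measurable).const_mul del
    have hQint : Integrable (fun x => 2 * mu * frobIp (strain V x) (strain V x)
        + lam * (∑ i, strain V x i i) * (∑ i, strain V x i i)
        + del * (inner ℝ (V x) (V x) : ℝ)) μm := by
      refine Integrable.mono (hV.2.const_mul (2 * mu + |lam| * d + del))
        hqm.aestronglyMeasurable (Filter.Eventually.of_forall fun x => ?_)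
      rw [frobIp_self, real_inner_self_eq_norm_sq]
      have htr : (∑ i, strain V x i i) ^ 2 ≤ (d:ℝ) * frobSq (strain V x) := trace_sq_le _
      rw [Real.norm_eq_abs, Real.norm_eq_abs,
        abs_of_nonneg (mul_nonneg hMc (hPV0 x))]
      have e1 : |2 * mu * frobSq (strain V x)
          + lam * (∑ i, strain V x i i) * (∑ i, strain V x i i) + del * ‖V x‖ ^ 2|
          ≤ 2 * mu * frobSq (strain V x) + |lam| * ((∑ i, strain V x i i)) ^ 2
            + del * ‖V x‖ ^ 2 := by
        refine (abs_add_three _ _ _).trans ?_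
        refine add_le_add (add_le_add ?_ ?_) ?_
        · rw [abs_of_nonneg (mul_nonneg (by positivity) (hS0 x))]
        · rw [mul_assoc, abs_mul, abs_mul_self, ← pow_two]
        · rw [abs_of_nonneg (mul_nonneg hdel.le (hN0 x))]
      refine e1.trans ?_
      have e2 : |lam| * ((∑ i, strain V x i i)) ^ 2 ≤ |lam| * ((d:ℝ) * frobSq (strain V x)) :=
        mul_le_mul_of_nonneg_left htr (abs_nonneg _)
      nlinarith [hSP x, hNP x, hS0 x, hN0 x, abs_nonneg lam, hPV0 x,
        mul_le_mul_of_nonneg_left (hSP x) (by positivity : (0:ℝ) ≤ 2 * mu),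
        mul_le_mul_of_nonneg_left (hNP x) hdel.le,
        mul_le_mul_of_nonneg_left (hSP x) (mul_nonneg (abs_nonneg lam) (by positivity : (0:ℝ) ≤ (d:ℝ)))]
    -- integral chain
    have step1 : ∫ x, c' * (frobSq (strain V x) + ‖V x‖ ^ 2) ∂μm ≤
        elasticityForm Ω mu lam del V V := by
      rw [elasticityForm]
      exact integral_mono ((hSint.add hNint).const_mul c') hQint hpt
    have step2 : ∫ x, c' * (frobSq (strain V x) + ‖V x‖ ^ 2) ∂μm =
        c' * ((∫ x, frobSq (strain V x) ∂μm) + ∫ x, ‖V x‖ ^ 2 ∂μm) := by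
      rw [integral_const_mul, integral_add hSint hNint]
    have step3 : c' / C * h1Sq Ω V ≤
        c' * ((∫ x, frobSq (strain V x) ∂μm) + ∫ x, ‖V x‖ ^ 2 ∂μm) := by
      have hk := hK V hV
      have h6 := mul_le_mul_of_nonneg_left hk (le_of_lt (div_pos hc' hC))
      calc c' / C * h1Sq Ω V ≤ c' / C *
          (C * ((∫ x, frobSq (strain V x) ∂μm) + ∫ x, ‖V x‖ ^ 2 ∂μm)) := h6
        _ = c' * ((∫ x, frobSq (strain V x) ∂μm) + ∫ x, ‖V x‖ ^ 2 ∂μm) := by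
            field_simp
    linarith [step1, step2.symm.le, step3]


end
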